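/- (Existence of a coverage-matching amplitude in the no-nugget case.) Assume σ_ε² = 0, Hypothesis H2, a ∈ (1/2, 1), q > 0, and 0 < δ < q. Fix y ∈ ℝⁿ and a real symmetric positive definite n×n matrix R; for σ² > 0 let K̄(σ²) be the matrix K̄ associated with K(σ²) = σ²R, and let R̄ be the matrix K̄ associated with K = R. If Card{ i ∈ {1,…,n} : (R̄y)ᵢ ≤ 0 } < na, then there exists σ² ∈ (0,∞) such that ψ⁺_δ(σ²) = a, where ψ⁺_δ(σ²) = (1/n)Σᵢ₌₁ⁿ h⁺_δ(q − (K̄(σ²)y)ᵢ/√(K̄(σ²)ᵢᵢ)). -/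

import Mathlib

open Matrix

/-- The matrix `K̄ = K⁻¹ − K⁻¹F(FᵀK⁻¹F)⁻¹FᵀK⁻¹`. -/
noncomputable def Kbar {n p : ℕ} (F : Matrix (Fin n) (Fin p) ℝ)
    (K : Matrix (Fin n) (Fin n) ℝ) : Matrix (Fin n) (Fin n) ℝ :=
  K⁻¹ - K⁻¹ * F * (Fᵀ * K⁻¹ * F)⁻¹ * Fᵀ * K⁻¹

/-- `h⁺_δ(x) = 1` if `x > δ`, `x/δ` if `0 < x ≤ δ`, `0` if `x ≤ 0`. -/
noncomputable def hplus (δ x : ℝ) : ℝ :=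
  if δ < x then 1 else if 0 < x then x / δ else 0

/-- `ψ⁺_δ(K) = (1/n) Σᵢ h⁺_δ(q − (K̄y)ᵢ/√(K̄ᵢᵢ))`. -/
noncomputable def psiPlus {n p : ℕ} (F : Matrix (Fin n) (Fin p) ℝ)
    (y : Fin n → ℝ) (δ q : ℝ) (K : Matrix (Fin n) (Fin n) ℝ) : ℝ :=
  (1 / n) * ∑ i, hplus δ (q - (Kbar F K *ᵥ y) i / Real.sqrt (Kbar F K i i))

/- ### Auxiliary lemmas -/

lemma hplus_eq {δ : ℝ} (hδ : 0 < δ) (x : ℝ) :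
    hplus δ x = min 1 (max 0 (x / δ)) := by
  unfold hplus
  split_ifs with h1 h2
  · rw [min_eq_left]
    rw [le_max_iff]
    right
    rw [le_div_iff₀ hδ, one_mul]
    linarith
  · rw [max_eq_right (by positivity), min_eq_right]
    rw [div_le_one hδ]; linarith
  · rw [max_eq_left, min_eq_right] <;>
      [norm_num; exact div_nonpos_of_nonpos_of_nonneg (by linarith) hδ.le]

lemma continuous_hplus {δ : ℝ} (hδ : 0 < δ) : Continuous (hplus δ) := by
  have : hplus δ = fun x => min 1 (max 0 (x / δ)) := funext (hplus_eq hδ)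
  rw [this]
  fun_prop

lemma hplus_one {δ x : ℝ} (h : δ < x) : hplus δ x = 1 := if_pos h

lemma hplus_zero {δ x : ℝ} (hδ : 0 < δ) (h : x ≤ 0) : hplus δ x = 0 := by
  unfold hplus
  rw [if_neg (by linarith), if_neg (by linarith)]

section Matrices

variable {n p : ℕ} (F : Matrix (Fin n) (Fin p) ℝ)

lemma transpose_eq_of_herm {m : ℕ} {M : Matrix (Fin m) (Fin m) ℝ}
    (h : M.IsHermitian) : Mᵀ = M := by
  rw [← Matrix.conjTranspose_eq_transpose_of_trivial]; exact h

lemma posdef_FtSF (hF : F.rank = p) {S : Matrix (Fin n) (Fin n) ℝ}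
    (hS : S.PosDef) : (Fᵀ * S * F).PosDef := by
  have hFinj : ∀ v : Fin p → ℝ, F *ᵥ v = 0 → v = 0 := by
    have hker : LinearMap.ker F.mulVecLin = ⊥ := by
      have h1 := LinearMap.finrank_range_add_finrank_ker F.mulVecLin
      have h2 : Module.finrank ℝ (LinearMap.range F.mulVecLin) = p := hF
      have h3 : Module.finrank ℝ (Fin p → ℝ) = p := by simp
      have h4 : Module.finrank ℝ (LinearMap.ker F.mulVecLin) = 0 := by omega
      exact Submodule.finrank_eq_zero.mp h4
    intro v hv
    have : v ∈ LinearMap.ker F.mulVecLin := by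
      simpa [Matrix.mulVecLin_apply] using hv
    simpa [hker] using this
  refine Matrix.PosDef.of_dotProduct_mulVec_pos ?_ ?_
  · have := Matrix.isHermitian_conjTranspose_mul_mul F hS.1
    simpa [Matrix.conjTranspose_eq_transpose_of_trivial] using this
  · intro x hx
    have hFx : F *ᵥ x ≠ 0 := fun h => hx (hFinj x h)
    have key := hS.dotProduct_mulVec_pos hFx
    have hstar : ∀ (m : ℕ) (v : Fin m → ℝ), star v = v := fun m v => funext fun j => rfl
    rw [hstar] at key ⊢
    calc (0:ℝ) < (F *ᵥ x) ⬝ᵥ (S *ᵥ (F *ᵥ x)) := key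
    _ = x ⬝ᵥ ((Fᵀ * S * F) *ᵥ x) := by
        rw [← Matrix.mulVec_mulVec, ← Matrix.mulVec_mulVec,
          Matrix.dotProduct_mulVec x, Matrix.vecMul_transpose]

lemma Kbar_eq (hF : F.rank = p) {R : Matrix (Fin n) (Fin n) ℝ} (hR : R.PosDef) :
    Kbar F R = (1 - F * (Fᵀ * R⁻¹ * F)⁻¹ * Fᵀ * R⁻¹)ᵀ * R⁻¹ *
      (1 - F * (Fᵀ * R⁻¹ * F)⁻¹ * Fᵀ * R⁻¹) := by
  set S := R⁻¹ with hSdef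
  have hS : S.PosDef := hR.inv
  set A := Fᵀ * S * F with hAdef
  have hA : A.PosDef := posdef_FtSF F hF hS
  set G := A⁻¹ with hGdef
  have hGA : G * A = 1 := Matrix.nonsing_inv_mul A hA.det_pos.ne'.isUnit
  have hGA' : G * (Fᵀ * (S * F)) = 1 := by
    rw [← hGA, hAdef]; simp only [Matrix.mul_assoc]
  have hSsym : Sᵀ = S := transpose_eq_of_herm hS.1
  have hAsym : Aᵀ = A := transpose_eq_of_herm hA.1
  have hGsym : Gᵀ = G := by
    rw [hGdef, Matrix.transpose_nonsing_inv, hAsym]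
  have hBt : (1 - F * G * Fᵀ * S)ᵀ = 1 - S * F * G * Fᵀ := by
    simp only [Matrix.transpose_sub, Matrix.transpose_one, Matrix.transpose_mul,
      Matrix.transpose_transpose, hSsym, hGsym, Matrix.mul_assoc]
  have hcancel : S * F * G * Fᵀ * S * (F * G * Fᵀ * S) = S * (F * G * Fᵀ * S) := by
    simp only [Matrix.mul_assoc]
    rw [show Fᵀ * (S * (F * (G * (Fᵀ * S)))) = Fᵀ * (S * F) * (G * (Fᵀ * S)) by
      simp only [Matrix.mul_assoc]]
    rw [← Matrix.mul_assoc G, hGA', Matrix.one_mul]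
  have expand : (1 - S * F * G * Fᵀ) * S * (1 - F * G * Fᵀ * S)
      = S - S * (F * G * Fᵀ * S) - (S * F * G * Fᵀ * S - S * F * G * Fᵀ * S * (F * G * Fᵀ * S)) := by
    rw [Matrix.sub_mul, Matrix.one_mul, Matrix.sub_mul, Matrix.mul_sub, Matrix.mul_one,
      Matrix.mul_sub, Matrix.mul_one]
  rw [hBt, expand, hcancel]
  simp only [Matrix.mul_assoc, sub_self, sub_zero]
  rw [show Kbar F R = S - S * F * G * Fᵀ * S from rfl]
  simp only [Matrix.mul_assoc]

lemma Kbar_diag_pos (hF : F.rank = p)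
    (hH2 : ∀ i : Fin n, Pi.single i (1:ℝ) ∉ LinearMap.range (Matrix.mulVecLin F))
    {R : Matrix (Fin n) (Fin n) ℝ} (hR : R.PosDef) (i : Fin n) :
    0 < Kbar F R i i := by
  set S := R⁻¹ with hSdef
  have hS : S.PosDef := hR.inv
  set B := 1 - F * (Fᵀ * S * F)⁻¹ * Fᵀ * S with hBdef
  have hKeq : Kbar F R = Bᵀ * S * B := Kbar_eq F hF hR
  set e : Fin n → ℝ := Pi.single i 1 with hedef
  have hBe : B *ᵥ e ≠ 0 := by
    intro h0
    apply hH2 i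
    have hfix : (F * (Fᵀ * S * F)⁻¹ * Fᵀ * S) *ᵥ e = e := by
      have h1 : B *ᵥ e = e - (F * (Fᵀ * S * F)⁻¹ * Fᵀ * S) *ᵥ e := by
        rw [hBdef, Matrix.sub_mulVec, Matrix.one_mulVec]
      rw [h1] at h0
      exact (sub_eq_zero.mp h0).symm
    refine ⟨((Fᵀ * S * F)⁻¹ * Fᵀ * S) *ᵥ e, ?_⟩
    rw [Matrix.mulVecLin_apply, Matrix.mulVec_mulVec,
      show F * ((Fᵀ * S * F)⁻¹ * Fᵀ * S) = F * (Fᵀ * S * F)⁻¹ * Fᵀ * S from by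
        simp only [Matrix.mul_assoc],
      hfix, hedef]
  have key := hS.dotProduct_mulVec_pos hBe
  have hstar : star (B *ᵥ e) = B *ᵥ e := funext fun j => rfl
  rw [hstar] at key
  have : Kbar F R i i = (B *ᵥ e) ⬝ᵥ (S *ᵥ (B *ᵥ e)) := by
    have h2 : Kbar F R i i = e ⬝ᵥ (Kbar F R *ᵥ e) := by
      rw [hedef]
      simp [Matrix.mulVec_single, single_dotProduct]
    rw [h2, hKeq, ← Matrix.mulVec_mulVec, ← Matrix.mulVec_mulVec,
      Matrix.dotProduct_mulVec e, Matrix.vecMul_transpose]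
  rw [this]
  exact key

lemma Kbar_smul (hF : F.rank = p) {R : Matrix (Fin n) (Fin n) ℝ} (hR : R.PosDef)
    {c : ℝ} (hc : c ≠ 0) : Kbar F (c • R) = c⁻¹ • Kbar F R := by
  have hS : (R⁻¹).PosDef := hR.inv
  have hA : (Fᵀ * R⁻¹ * F).PosDef := posdef_FtSF F hF hS
  have hRinv : R * R⁻¹ = 1 := Matrix.mul_nonsing_inv R hR.det_pos.ne'.isUnit
  have hAinv : (Fᵀ * R⁻¹ * F) * (Fᵀ * R⁻¹ * F)⁻¹ = 1 :=
    Matrix.mul_nonsing_inv _ hA.det_pos.ne'.isUnit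
  have h1 : (c • R)⁻¹ = c⁻¹ • R⁻¹ := Matrix.inv_eq_right_inv (by
    rw [smul_mul_assoc, mul_smul_comm, smul_smul, mul_inv_cancel₀ hc, one_smul, hRinv])
  have h2 : Fᵀ * (c⁻¹ • R⁻¹) * F = c⁻¹ • (Fᵀ * R⁻¹ * F) := by
    rw [Matrix.mul_smul, Matrix.smul_mul]
  have h3 : (c⁻¹ • (Fᵀ * R⁻¹ * F))⁻¹ = c • (Fᵀ * R⁻¹ * F)⁻¹ := Matrix.inv_eq_right_inv (by
    rw [smul_mul_assoc, mul_smul_comm, smul_smul, inv_mul_cancel₀ hc, one_smul, hAinv])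
  unfold Kbar
  rw [h1, h2, h3]
  simp only [Matrix.smul_mul, Matrix.mul_smul, smul_smul, smul_sub, Matrix.mul_assoc]
  congr 2
  field_simp

end Matrices

/-- Existence of a coverage-matching amplitude in the no-nugget case
(`K(σ²) = σ²R`): if `#{i : (R̄y)ᵢ ≤ 0} < na` with `R̄ = K̄` for `K = R`,
then `ψ⁺_δ(σ²) = a` for some `σ² > 0`. -/
theorem stmt18 (n p : ℕ) (hp : 0 < p) (hpn : p < n)
    (F : Matrix (Fin n) (Fin p) ℝ) (hF : F.rank = p)
    (hH2 : ∀ i : Fin n, Pi.single i (1 : ℝ) ∉ LinearMap.range (Matrix.mulVecLin F))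
    (y : Fin n → ℝ) (R : Matrix (Fin n) (Fin n) ℝ) (hR : R.PosDef)
    (a : ℝ) (ha : a ∈ Set.Ioo (1 / 2 : ℝ) 1)
    (q : ℝ) (hq : 0 < q) (δ : ℝ) (hδ : 0 < δ) (hδq : δ < q)
    (hcard : ((Finset.univ.filter fun i : Fin n =>
        (Kbar F R *ᵥ y) i ≤ 0).card : ℝ) < n * a) :
    ∃ s : ℝ, 0 < s ∧ psiPlus F y δ q (s • R) = a := by
  have hn : 0 < n := hp.trans hpn
  have hn0 : (0:ℝ) < n := Nat.cast_pos.mpr hn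
  set W := Kbar F R with hWdef
  set w : Fin n → ℝ := W *ᵥ y with hwdef
  have hd : ∀ i, 0 < W i i := Kbar_diag_pos F hF hH2 hR
  set c : Fin n → ℝ := fun i => w i / Real.sqrt (W i i) with hcdef
  set g : ℝ → ℝ := fun t => (1 / n) * ∑ i, hplus δ (q - t * c i) with hgdef
  have hgc : Continuous g := by
    apply Continuous.mul continuous_const
    apply continuous_finset_sum
    intro i _
    exact (continuous_hplus hδ).comp (by fun_prop)
  have hg0 : g 0 = 1 := by
    rw [hgdef]
    simp only [zero_mul, sub_zero, hplus_one hδq, Finset.sum_const,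
      Finset.card_univ, Fintype.card_fin, nsmul_eq_mul, mul_one]
    field_simp
  -- small t with g t > a
  have h1 : ∀ᶠ t in nhds 0, a < g t :=
    hgc.continuousAt.eventually (eventually_gt_nhds (by rw [hg0]; exact ha.2))
  have h2 : ∀ᶠ t in nhdsWithin 0 (Set.Ioi 0), a < g t ∧ t ∈ Set.Ioi (0:ℝ) :=
    (h1.filter_mono nhdsWithin_le_nhds).and eventually_mem_nhdsWithin
  obtain ⟨t₀, ht₀a, ht₀pos⟩ := h2.exists
  -- large t
  set t₁ : ℝ := 1 + ∑ i, |q / c i| with ht₁def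
  have ht₁pos : 0 < t₁ := by
    have h0 : (0:ℝ) ≤ ∑ i, |q / c i| := Finset.sum_nonneg fun i _ => abs_nonneg _
    rw [ht₁def]; linarith
  have hbig : ∀ i, 0 < c i → q ≤ t₁ * c i := by
    intro i hci
    have h3 : q / c i ≤ t₁ := by
      have h4 : |q / c i| ≤ ∑ j, |q / c j| :=
        Finset.single_le_sum (f := fun j => |q / c j|) (fun j _ => abs_nonneg _)
          (Finset.mem_univ i)
      calc q / c i ≤ |q / c i| := le_abs_self _
        _ ≤ t₁ := by rw [ht₁def]; linarith
    exact (div_le_iff₀ hci).mp h3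
  have hceq : ∀ i, (c i ≤ 0 ↔ w i ≤ 0) := by
    intro i
    have hsq : 0 < Real.sqrt (W i i) := Real.sqrt_pos.mpr (hd i)
    constructor
    · intro h
      have := mul_nonpos_of_nonpos_of_nonneg h hsq.le
      rwa [hcdef, div_mul_cancel₀ _ hsq.ne'] at this
    · intro h
      exact div_nonpos_of_nonpos_of_nonneg h hsq.le
  have hgt₁ : g t₁ < a := by
    have hterm : ∀ i, hplus δ (q - t₁ * c i) = if w i ≤ 0 then 1 else 0 := by
      intro i
      by_cases hwi : w i ≤ 0
      · rw [if_pos hwi]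
        have hci : c i ≤ 0 := (hceq i).mpr hwi
        have : t₁ * c i ≤ 0 := mul_nonpos_of_nonneg_of_nonpos ht₁pos.le hci
        exact hplus_one (by linarith)
      · rw [if_neg hwi]
        have hci : 0 < c i := by
          by_contra h
          exact hwi ((hceq i).mp (not_lt.mp h))
        exact hplus_zero hδ (by linarith [hbig i hci])
    rw [hgdef]
    simp only [hterm]
    rw [Finset.sum_boole]
    have : (Finset.univ.filter fun i => w i ≤ 0) =
        (Finset.univ.filter fun i : Fin n => (Kbar F R *ᵥ y) i ≤ 0) := rfl
    rw [this]
    rw [one_div, inv_mul_lt_iff₀ hn0]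
    exact hcard
  -- IVT
  have hmem : a ∈ Set.uIcc (g t₀) (g t₁) := by
    rw [Set.mem_uIcc]
    right
    exact ⟨hgt₁.le, ht₀a.le⟩
  obtain ⟨t, htmem, hgt⟩ := intermediate_value_uIcc hgc.continuousOn hmem
  have ht : 0 < t := by
    rw [Set.mem_uIcc] at htmem
    rcases htmem with ⟨h5, _⟩ | ⟨h5, _⟩ <;> [exact lt_of_lt_of_le ht₀pos h5;
      exact lt_of_lt_of_le ht₁pos h5]
  refine ⟨(t * t)⁻¹, by positivity, ?_⟩
  have hscale : Kbar F ((t * t)⁻¹ • R) = (t * t) • W := by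
    rw [Kbar_smul F hF hR (by positivity), inv_inv, hWdef]
  rw [← hgt]
  unfold psiPlus
  rw [hscale, hgdef]
  congr 1
  apply Finset.sum_congr rfl
  intro i _
  congr 1
  have hE : (((t * t) • W) *ᵥ y) i = (t * t) * w i := by
    rw [Matrix.smul_mulVec]; rfl
  have hD : ((t * t) • W) i i = (t * t) * W i i := rfl
  rw [hE, hD]
  have hsq : 0 < Real.sqrt (W i i) := Real.sqrt_pos.mpr (hd i)
  rw [Real.sqrt_mul (by positivity), Real.sqrt_mul_self ht.le]
  rw [hcdef]
  field_simp
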